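/- For every positive integer d, the number of integer tetrahedra with diameter d and perimeter 3d + 4, up to congruence, equals d − 1. -/

import Mathlib

/-- An integer tetrahedron: four affinely independent points in `ℝ³` all of whose
pairwise distances are (positive) integers. -/
def IsIntegerTetrahedron (v : Fin 4 → EuclideanSpace ℝ (Fin 3)) : Prop :=
  AffineIndependent ℝ v ∧ ∀ i j : Fin 4, i ≠ j → ∃ m : ℕ, 0 < m ∧ dist (v i) (v j) = m

/-- `v` has perimeter `n`: the six edge lengths sum to `n` (ordered pairs count twice). -/
def TetraPerim (v : Fin 4 → EuclideanSpace ℝ (Fin 3)) (n : ℕ) : Prop :=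
  ∑ i : Fin 4, ∑ j : Fin 4, dist (v i) (v j) = 2 * (n : ℝ)

/-- `v` has diameter `d`: the maximum of the six edge lengths is `d`. -/
def TetraDiam (v : Fin 4 → EuclideanSpace ℝ (Fin 3)) (d : ℕ) : Prop :=
  (∃ i j : Fin 4, dist (v i) (v j) = (d : ℝ)) ∧
    ∀ i j : Fin 4, dist (v i) (v j) ≤ (d : ℝ)

/-- Two tetrahedra are congruent if after a permutation of the vertices all
corresponding edge lengths agree. -/
def TetraCongruent (v w : Fin 4 → EuclideanSpace ℝ (Fin 3)) : Prop :=
  ∃ σ : Equiv.Perm (Fin 4), ∀ i j : Fin 4, dist (w i) (w j) = dist (v (σ i)) (v (σ j))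

/-- The number of integer tetrahedra of perimeter `n` and diameter `d`,
up to congruence. -/
noncomputable def tetraCount (n d : ℕ) : ℕ :=
  Nat.card (Quot (fun v w : {v : Fin 4 → EuclideanSpace ℝ (Fin 3) //
    IsIntegerTetrahedron v ∧ TetraPerim v n ∧ TetraDiam v d} =>
      TetraCongruent v.1 w.1))


noncomputable def mk3 (a b c : ℝ) : EuclideanSpace ℝ (Fin 3) :=
  (WithLp.equiv 2 (Fin 3 → ℝ)).symm ![a,b,c]

lemma mk3_dist (a b c x y z : ℝ) : dist (mk3 a b c) (mk3 x y z) =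
    Real.sqrt ((a-x)^2 + (b-y)^2 + (c-z)^2) := by
  rw [EuclideanSpace.dist_eq]
  simp [mk3, Fin.sum_univ_three, Real.dist_eq, sq_abs]

lemma pos_aux {D u : ℝ} (hD : 2 ≤ D) (h1 : 1 - D ≤ u) (h2 : u ≤ D - 1) :
    0 < (2*D+1)*(D^2-u^2) := by
  have : D^2 - u^2 = (D-u)*(D+u) := by ring
  rw [this]
  exact mul_pos (by linarith) (mul_pos (by linarith) (by linarith))

lemma pos_of_scaled {D p A : ℝ} (hD : 2 ≤ D) (hA : 0 < A) (h : 4*D^2*p = A) : 0 < p := by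
  by_contra hcon
  push_neg at hcon
  have h4 : (0:ℝ) ≤ 4*D^2 := by positivity
  have := mul_nonpos_of_nonneg_of_nonpos h4 hcon
  linarith

lemma type1_key {D u : ℝ} (hD : 3 ≤ D) (h1 : 3 - D ≤ u) (h2 : u ≤ D - 3) :
    4*D^2 < (2*D+1)*(D^2-u^2) := by
  have m1 : 0 ≤ (D-3-u)*(D-3+u) := mul_nonneg (by linarith) (by linarith)
  have m2 : (2*D+1)*((D^2-u^2) - (6*D-9)) ≥ 0 := by nlinarith [m1]
  nlinarith [m2]

lemma type2_key {D u : ℝ} (hD : 2 ≤ D) (h1 : 1 - D ≤ u) (h2 : u ≤ D - 3) :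
    (4*(D+1)^2 + (2*D+1)*(D^2-u^2) + (2*D+1)*(D^2-(u+2)^2) - 16*D^2)^2
      < 4*((2*D+1)*(D^2-u^2))*((2*D+1)*(D^2-(u+2)^2)) := by
  have hs : (u+1)^2 ≤ (D-2)^2 := by
    nlinarith [mul_nonneg (by linarith : (0:ℝ) ≤ D - 2 - (u+1)) (by linarith : (0:ℝ) ≤ D - 2 + (u+1))]
  have t1 : 0 < D^2*(11*D^2-10*D-10) := by nlinarith [sq_nonneg (D-2)]
  have t2 : 0 ≤ ((D-2)^2-(u+1)^2)*((3*D+1)*(D-1)*(2*D+1)+(2*D+1)^2) :=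
    mul_nonneg (by linarith)
      (add_nonneg (mul_nonneg (mul_nonneg (by linarith) (by linarith)) (by linarith)) (sq_nonneg _))
  have hf : 0 < D^2*(11*D^2-10*D-10) + ((D-2)^2-(u+1)^2)*((3*D+1)*(D-1)*(2*D+1)+(2*D+1)^2) := by
    linarith
  linarith [hf]

lemma construct (D β γ β' γ' : ℝ) (hD : 2 ≤ D) (hβ1 : 1 ≤ β) (hβd : β + 1 ≤ D)
    (hγ : β + γ = D + 1) (hγ' : β' + γ' = D + 1)
    (hc : (β' = β ∧ 2 ≤ β) ∨ β' = β + 1) :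
    ∃ v : Fin 4 → EuclideanSpace ℝ (Fin 3),
      AffineIndependent ℝ v ∧
      dist (v 0) (v 1) = D ∧ dist (v 0) (v 2) = β ∧ dist (v 0) (v 3) = β' ∧
      dist (v 1) (v 2) = γ ∧ dist (v 1) (v 3) = γ' ∧ dist (v 2) (v 3) = 2 := by
  have hDpos : (0:ℝ) < D := by linarith
  have hDne : D ≠ 0 := ne_of_gt hDpos
  obtain ⟨xR, hxR⟩ : ∃ x:ℝ, x = (D^2 + β^2 - γ^2)/(2*D) := ⟨_, rfl⟩
  obtain ⟨p, hp'⟩ : ∃ x:ℝ, x = β^2 - xR^2 := ⟨_, rfl⟩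
  obtain ⟨xS, hxS⟩ : ∃ x:ℝ, x = (D^2 + β'^2 - γ'^2)/(2*D) := ⟨_, rfl⟩
  obtain ⟨q, hq'⟩ : ∃ x:ℝ, x = β'^2 - xS^2 := ⟨_, rfl⟩
  obtain ⟨g, hg'⟩ : ∃ x:ℝ, x = (xS - xR)^2 := ⟨_, rfl⟩
  have hγeq : γ = D + 1 - β := by linarith
  have hγ'eq : γ' = D + 1 - β' := by linarith
  have e1 : 4*D^2*p = 4*D^2*β^2 - (D^2+β^2-γ^2)^2 := by
    rw [hp', hxR]; field_simp; ring
  have e2 : 4*D^2*q = 4*D^2*β'^2 - (D^2+β'^2-γ'^2)^2 := by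
    rw [hq', hxS]; field_simp; ring
  obtain ⟨u, hu⟩ : ∃ x:ℝ, x = 2*β - D - 1 := ⟨_, rfl⟩
  have e1' : 4*D^2*p = (2*D+1)*(D^2-u^2) := by rw [e1, hγeq, hu]; ring
  have hu1 : 1 - D ≤ u := by rw [hu]; linarith
  have hu2 : u ≤ D - 3 := by rw [hu]; linarith
  have hp : 0 < p := pos_of_scaled hD (pos_aux hD hu1 (by linarith)) e1'
  have hq : 0 < q := by
    rcases hc with ⟨h1,h2⟩|h1
    · have hqq : q = p := by rw [hq', hp', h1, hxS, hxR, h1, hγ'eq, hγeq, h1]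
      rw [hqq]; exact hp
    · have e2' : 4*D^2*q = (2*D+1)*(D^2-(u+2)^2) := by rw [e2, hγ'eq, h1, hu]; ring
      exact pos_of_scaled hD (pos_aux hD (by linarith) (by linarith)) e2'
  have hK : (g + p + q - 4)^2 < 4*p*q := by
    rcases hc with ⟨h1,h2⟩|h1
    · have hD3 : (3:ℝ) ≤ D := by linarith
      have hcc : γ' = γ := by rw [hγ'eq, hγeq, h1]
      have hqq : q = p := by rw [hq', hp', h1, hxS, hxR, h1, hcc]
      have hgg : g = 0 := by rw [hg', hxS, hxR, h1, hcc]; ring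
      have hp1 : 1 < p := by
        have key := type1_key hD3 (by linarith : 3 - D ≤ u) hu2
        by_contra hcon
        push_neg at hcon
        have h4 : (0:ℝ) ≤ 4*D^2 := by positivity
        have := mul_le_mul_of_nonneg_left hcon h4
        rw [e1'] at this
        simp only [mul_one] at this
        linarith only [this, key]
      rw [hqq, hgg]
      linarith only [hp1]
    · have e2' : 4*D^2*q = (2*D+1)*(D^2-(u+2)^2) := by rw [e2, hγ'eq, h1, hu]; ring
      have e3 : 4*D^2*g = 4*(D+1)^2 := by
        have hstep : xS - xR = (D+1)/D := by
          rw [hxS, hxR, hγ'eq, hγeq, h1]; field_simp; ring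
        rw [hg', hstep]; field_simp
      have Hcore := type2_key hD hu1 hu2
      have H : (4*D^2*g + 4*D^2*p + 4*D^2*q - 16*D^2)^2 < 4*(4*D^2*p)*(4*D^2*q) := by
        rw [e1', e2', e3]; linarith only [Hcore]
      have hX : (0:ℝ) < (4*D^2)^2 * (4*p*q - (g+p+q-4)^2) := by linarith only [H]
      have hP : (0:ℝ) < (4*D^2)^2 := by positivity
      by_contra hcon
      push_neg at hcon
      have : (4*D^2)^2 * (4*p*q - (g+p+q-4)^2) ≤ 0 :=
        mul_nonpos_of_nonneg_of_nonpos hP.le (by linarith only [hcon])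
      linarith only [this, hX]
  obtain ⟨yR, hyRdef⟩ : ∃ x:ℝ, x = Real.sqrt p := ⟨_, rfl⟩
  have hyRpos : 0 < yR := hyRdef ▸ Real.sqrt_pos.mpr hp
  have hyR2 : yR^2 = p := by rw [hyRdef]; exact Real.sq_sqrt hp.le
  obtain ⟨w, hwdef⟩ : ∃ x:ℝ, x = (g + p + q - 4)/(2*yR) := ⟨_, rfl⟩
  have hw : 2*yR*w = g + p + q - 4 := by
    rw [hwdef]; field_simp
  have hw2 : w^2 * (4*p) = (g+p+q-4)^2 := by
    have h : (2*yR*w)^2 = (g+p+q-4)^2 := by rw [hw]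
    linear_combination h - 4*w^2*hyR2
  have hzz : 0 < q - w^2 := by
    by_contra hcon
    push_neg at hcon
    have : (q - w^2)*(4*p) ≤ 0 := mul_nonpos_of_nonpos_of_nonneg (by linarith only [hcon]) (by linarith only [hp])
    linarith only [hK, hw2, this]
  obtain ⟨z, hzdef⟩ : ∃ x:ℝ, x = Real.sqrt (q - w^2) := ⟨_, rfl⟩
  have hzpos : 0 < z := hzdef ▸ Real.sqrt_pos.mpr hzz
  have hz2 : z^2 = q - w^2 := by rw [hzdef]; exact Real.sq_sqrt hzz.le
  have h2dxR : 2*D*xR = D^2+β^2-γ^2 := by rw [hxR]; field_simp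
  have h2dxS : 2*D*xS = D^2+β'^2-γ'^2 := by rw [hxS]; field_simp
  have hβ'1 : 1 ≤ β' := by rcases hc with ⟨h1,_⟩|h1 <;> rw [h1] <;> linarith
  have hγ0 : 0 ≤ γ := by linarith
  have hβ'd : β' ≤ D := by rcases hc with ⟨h1,_⟩|h1 <;> rw [h1] <;> linarith
  have hγ'0 : 0 ≤ γ' := by linarith
  refine ⟨![mk3 0 0 0, mk3 D 0 0, mk3 xR yR 0, mk3 xS w z], ?_, ?_, ?_, ?_, ?_, ?_, ?_⟩
  · rw [affineIndependent_iff_linearIndependent_vsub ℝ _ 0, Fintype.linearIndependent_iff]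
    intro gg hsum
    set v : Fin 4 → EuclideanSpace ℝ (Fin 3) := ![mk3 0 0 0, mk3 D 0 0, mk3 xR yR 0, mk3 xS w z] with hv
    have key : ∀ ℓ : Fin 3, ∑ i : {x : Fin 4 // x ≠ 0}, gg i * ((v i) ℓ - (v 0) ℓ) = 0 := by
      intro ℓ
      have h := congrArg (EuclideanSpace.proj (𝕜 := ℝ) ℓ) hsum
      rw [map_sum, map_zero] at h
      simpa [vsub_eq_sub, mul_comm] using h
    have huniv : (Finset.univ : Finset {x : Fin 4 // x ≠ 0}) =
        {⟨1, by decide⟩, ⟨2, by decide⟩, ⟨3, by decide⟩} := by decide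
    have key' : ∀ ℓ : Fin 3, gg ⟨1, by decide⟩ * ((v 1) ℓ - (v 0) ℓ)
        + gg ⟨2, by decide⟩ * ((v 2) ℓ - (v 0) ℓ)
        + gg ⟨3, by decide⟩ * ((v 3) ℓ - (v 0) ℓ) = 0 := by
      intro ℓ
      have hk := key ℓ
      rw [huniv, Finset.sum_insert (by decide), Finset.sum_insert (by decide),
        Finset.sum_singleton] at hk
      linarith only [hk]
    have e0 : ∀ ℓ : Fin 3, (v 0) ℓ = 0 := by
      intro ℓ; show (mk3 0 0 0) ℓ = 0
      fin_cases ℓ <;> simp [mk3]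
    have hg3 : gg ⟨3, by decide⟩ = 0 := by
      have hk := key' 2
      rw [e0] at hk
      have h1 : (v 1) 2 = 0 := by show (mk3 D 0 0) 2 = 0; simp [mk3]
      have h2 : (v 2) 2 = 0 := by show (mk3 xR yR 0) 2 = 0; simp [mk3]
      have h3 : (v 3) 2 = z := by show (mk3 xS w z) 2 = z; simp [mk3]
      rw [h1, h2, h3] at hk
      have hz' : gg ⟨3, by decide⟩ * z = 0 := by linarith only [hk]
      exact (mul_eq_zero.mp hz').resolve_right (ne_of_gt hzpos)
    have hg2 : gg ⟨2, by decide⟩ = 0 := by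
      have hk := key' 1
      rw [e0] at hk
      have h1 : (v 1) 1 = 0 := by show (mk3 D 0 0) 1 = 0; simp [mk3]
      have h2 : (v 2) 1 = yR := by show (mk3 xR yR 0) 1 = yR; simp [mk3]
      have h3 : (v 3) 1 = w := by show (mk3 xS w z) 1 = w; simp [mk3]
      rw [h1, h2, h3, hg3] at hk
      have hy' : gg ⟨2, by decide⟩ * yR = 0 := by linarith only [hk]
      exact (mul_eq_zero.mp hy').resolve_right (ne_of_gt hyRpos)
    have hg1 : gg ⟨1, by decide⟩ = 0 := by
      have hk := key' 0
      rw [e0] at hk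
      have h1 : (v 1) 0 = D := by show (mk3 D 0 0) 0 = D; simp [mk3]
      rw [h1, hg3, hg2] at hk
      have hD' : gg ⟨1, by decide⟩ * D = 0 := by linarith only [hk]
      exact (mul_eq_zero.mp hD').resolve_right hDne
    intro i
    obtain ⟨i, hi⟩ := i
    fin_cases i
    · exact absurd rfl hi
    · exact hg1
    · exact hg2
    · exact hg3
  · show dist (mk3 0 0 0) (mk3 D 0 0) = D
    rw [mk3_dist, show ((0:ℝ)-D)^2+((0:ℝ)-0)^2+((0:ℝ)-0)^2 = D^2 by ring]
    exact Real.sqrt_sq hDpos.le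
  · show dist (mk3 0 0 0) (mk3 xR yR 0) = β
    rw [mk3_dist, show ((0:ℝ)-xR)^2+((0:ℝ)-yR)^2+((0:ℝ)-0)^2 = β^2 by
      linear_combination hyR2 + hp']
    exact Real.sqrt_sq (by linarith)
  · show dist (mk3 0 0 0) (mk3 xS w z) = β'
    rw [mk3_dist, show ((0:ℝ)-xS)^2+((0:ℝ)-w)^2+((0:ℝ)-z)^2 = β'^2 by
      linear_combination hz2 + hq']
    exact Real.sqrt_sq (by linarith)
  · show dist (mk3 D 0 0) (mk3 xR yR 0) = γ
    rw [mk3_dist, show (D-xR)^2+((0:ℝ)-yR)^2+((0:ℝ)-0)^2 = γ^2 by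
      linear_combination hyR2 + hp' - h2dxR]
    exact Real.sqrt_sq hγ0
  · show dist (mk3 D 0 0) (mk3 xS w z) = γ'
    rw [mk3_dist, show (D-xS)^2+((0:ℝ)-w)^2+((0:ℝ)-z)^2 = γ'^2 by
      linear_combination hz2 + hq' - h2dxS]
    exact Real.sqrt_sq hγ'0
  · show dist (mk3 xR yR 0) (mk3 xS w z) = 2
    rw [mk3_dist, show (xR-xS)^2+(yR-w)^2+((0:ℝ)-z)^2 = 2^2 by
      linear_combination hyR2 + hz2 - hw - hg']
    exact Real.sqrt_sq (by norm_num)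

def M6 (d B C b c : ℕ) : Fin 4 → Fin 4 → ℕ :=
  ![![0,d,B,b],![d,0,C,c],![B,C,0,2],![b,c,2,0]]

lemma realize (d B C b c : ℕ) (hBC : B + C = d + 1) (hbc : b + c = d + 1)
    (hcase : (b = B ∧ 2 ≤ B ∧ B + 1 ≤ d) ∨ (b = B + 1 ∧ 1 ≤ B ∧ B + 1 ≤ d)) :
    ∃ v : Fin 4 → EuclideanSpace ℝ (Fin 3),
      AffineIndependent ℝ v ∧ ∀ i j, dist (v i) (v j) = (M6 d B C b c i j : ℝ) := by
  have hB1 : 1 ≤ B := by omega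
  have hBd : B + 1 ≤ d := by rcases hcase with ⟨_,_,h⟩|⟨_,_,h⟩ <;> omega
  have hd2 : 2 ≤ d := by omega
  obtain ⟨v, hai, h01, h02, h03, h12, h13, h23⟩ :=
    construct (d:ℝ) (B:ℝ) (C:ℝ) (b:ℝ) (c:ℝ)
      (by exact_mod_cast Nat.cast_le.mpr hd2)
      (by exact_mod_cast Nat.cast_le.mpr hB1)
      (by exact_mod_cast (Nat.cast_le.mpr hBd : ((B+1:ℕ):ℝ) ≤ (d:ℝ)))
      (by exact_mod_cast congrArg (Nat.cast : ℕ → ℝ) hBC)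
      (by exact_mod_cast congrArg (Nat.cast : ℕ → ℝ) hbc)
      (by rcases hcase with ⟨h1,h2,_⟩|⟨h1,_⟩
          · exact Or.inl ⟨by exact_mod_cast congrArg (Nat.cast : ℕ → ℝ) h1,
              by exact_mod_cast Nat.cast_le.mpr h2⟩
          · exact Or.inr (by exact_mod_cast congrArg (Nat.cast : ℕ → ℝ) h1))
  refine ⟨v, hai, ?_⟩
  intro i j
  fin_cases i <;> fin_cases j
  · simp [M6]
  · exact h01
  · exact h02
  · exact h03
  · rw [dist_comm]; exact h01
  · simp [M6]
  · exact h12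
  · exact h13
  · rw [dist_comm]; exact h02
  · rw [dist_comm]; exact h12
  · simp [M6]
  · push_cast [M6]; exact h23
  · rw [dist_comm]; exact h03
  · rw [dist_comm]; exact h13
  · push_cast [M6]; rw [dist_comm]; exact h23
  · simp [M6]

lemma strict_tri {v : Fin 4 → EuclideanSpace ℝ (Fin 3)} (h : AffineIndependent ℝ v)
    {i j k : Fin 4} (hij : i ≠ j) (hjk : j ≠ k) (hik : i ≠ k) :
    dist (v i) (v k) < dist (v i) (v j) + dist (v j) (v k) := by
  rcases lt_or_eq_of_le (dist_triangle (v i) (v j) (v k)) with h'|h'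
  · exact h'
  exfalso
  have hw : Wbtw ℝ (v i) (v j) (v k) := dist_add_dist_eq_iff.mp h'.symm
  have hcol : Collinear ℝ ({v i, v j, v k} : Set _) := hw.collinear
  have hinj : Function.Injective ![i, j, k] := by
    intro a b hab
    fin_cases a <;> fin_cases b <;> simp_all
  have hsub : AffineIndependent ℝ (v ∘ ![i, j, k]) :=
    h.comp_embedding ⟨![i, j, k], hinj⟩
  have hsub' : AffineIndependent ℝ ![v i, v j, v k] := by
    convert hsub using 1
    ext a
    fin_cases a <;> rfl
  rw [affineIndependent_iff_not_collinear_set] at hsub'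
  exact hsub' hcol



lemma M6_pos (d B C b c : ℕ) (hd : 0 < d) (hB : 0 < B) (hC : 0 < C) (hb : 0 < b)
    (hc : 0 < c) : ∀ i j : Fin 4, i ≠ j → 0 < M6 d B C b c i j := by
  intro i j hij
  fin_cases i <;> fin_cases j <;> simp [M6] <;> omega

lemma M6_le (d B C b c : ℕ) (hd : 2 ≤ d) (hB : B ≤ d) (hC : C ≤ d) (hb : b ≤ d)
    (hc : c ≤ d) : ∀ i j : Fin 4, M6 d B C b c i j ≤ d := by
  intro i j
  fin_cases i <;> fin_cases j <;> simp [M6] <;> omega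

lemma M6_sum (d B C b c : ℕ) (hBC : B + C = d + 1) (hbc : b + c = d + 1) :
    ∑ i, ∑ j, M6 d B C b c i j = 6*d+8 := by
  simp [Fin.sum_univ_four, M6]
  omega

lemma M6_rowsq (d B C b c : ℕ) (v : Fin 4 → EuclideanSpace ℝ (Fin 3))
    (hdist : ∀ i j, dist (v i) (v j) = (M6 d B C b c i j : ℝ)) :
    ∑ i : Fin 4, (∑ j : Fin 4, dist (v i) (v j))^2 =
      ((d:ℝ)+B+b)^2 + ((d:ℝ)+C+c)^2 + ((B:ℝ)+C+2)^2 + ((b:ℝ)+c+2)^2 := by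
  simp only [Fin.sum_univ_four, hdist]
  simp only [M6, Matrix.cons_val_zero, Matrix.cons_val_one, Matrix.cons_val_two, Matrix.cons_val_three, Matrix.head_cons, Matrix.tail_cons]
  push_cast
  ring

lemma tetra_equiv : Equivalence TetraCongruent := by
  constructor
  · intro v; exact ⟨1, by simp⟩
  · rintro v w ⟨σ, h⟩
    refine ⟨σ⁻¹, fun i j => ?_⟩
    rw [h (σ⁻¹ i) (σ⁻¹ j), Equiv.Perm.coe_inv, Equiv.apply_symm_apply, Equiv.apply_symm_apply]
  · rintro u v w ⟨σ, h1⟩ ⟨π, h2⟩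
    refine ⟨π.trans σ, fun i j => ?_⟩
    rw [h2 i j, h1 (π i) (π j)]; rfl

lemma rowsum_invariant {v w : Fin 4 → EuclideanSpace ℝ (Fin 3)} (σ : Equiv.Perm (Fin 4))
    (h : ∀ i j, dist (w i) (w j) = dist (v (σ i)) (v (σ j))) :
    ∑ i : Fin 4, (∑ j : Fin 4, dist (w i) (w j))^2
      = ∑ i : Fin 4, (∑ j : Fin 4, dist (v i) (v j))^2 := by
  calc ∑ i : Fin 4, (∑ j : Fin 4, dist (w i) (w j))^2
      = ∑ i : Fin 4, (∑ j : Fin 4, dist (v (σ i)) (v (σ j)))^2 := by simp_rw [h]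
    _ = ∑ i : Fin 4, (∑ j : Fin 4, dist (v (σ i)) (v j))^2 := by
        refine Finset.sum_congr rfl fun i _ => ?_
        congr 1
        exact Equiv.sum_comp σ (fun j => dist (v (σ i)) (v j))
    _ = ∑ i : Fin 4, (∑ j : Fin 4, dist (v i) (v j))^2 :=
        Equiv.sum_comp σ (fun i => (∑ j : Fin 4, dist (v i) (v j))^2)

lemma edges_exist (d : ℕ) (hd : 0 < d) (v : Fin 4 → EuclideanSpace ℝ (Fin 3))
    (hI : IsIntegerTetrahedron v) (hP : TetraPerim v (3*d+4)) (hDm : TetraDiam v d) :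
    ∃ e : Fin 4 → Fin 4 → ℕ, (∀ i j, dist (v i) (v j) = (e i j : ℝ)) ∧
      (∀ i j, e i j = e j i) ∧ (∀ i, e i i = 0) ∧ (∀ i j, i ≠ j → 0 < e i j) ∧
      (∀ i j, e i j ≤ d) ∧ (∀ i j k, i ≠ j → j ≠ k → i ≠ k → e i k < e i j + e j k) ∧
      (∃ i j, i ≠ j ∧ e i j = d) ∧ (∑ i, ∑ j, e i j = 6*d+8) := by
  classical
  choose f hf using hI.2
  obtain ⟨e, he⟩ : ∃ e : Fin 4 → Fin 4 → ℕ,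
      e = fun i j => if h : i = j then 0 else f i j h := ⟨_, rfl⟩
  have hdiag : ∀ i, e i i = 0 := fun i => by rw [he]; exact dif_pos rfl
  have hoff : ∀ i j, (h : i ≠ j) → e i j = f i j h := fun i j h => by rw [he]; exact dif_neg h
  have hdist : ∀ i j, dist (v i) (v j) = (e i j : ℝ) := by
    intro i j
    by_cases h : i = j
    · subst h; rw [hdiag]; simp
    · rw [hoff i j h]; exact (hf i j h).2
  have hpos : ∀ i j, i ≠ j → 0 < e i j := by
    intro i j h; rw [hoff i j h]; exact (hf i j h).1
  refine ⟨e, hdist, ?_, hdiag, hpos, ?_, ?_, ?_, ?_⟩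
  · intro i j
    by_cases h : i = j
    · subst h; rfl
    · have e1 := hdist i j
      have e2 := hdist j i
      rw [dist_comm] at e1
      have : ((e i j : ℕ) : ℝ) = ((e j i : ℕ) : ℝ) := by rw [← e1, e2]
      exact_mod_cast this
  · intro i j
    by_cases h : i = j
    · subst h; rw [hdiag]; omega
    · have h2 := hDm.2 i j
      rw [hdist i j] at h2
      exact_mod_cast h2
  · intro i j k hij hjk hik
    have h := strict_tri hI.1 hij hjk hik
    rw [hdist i j, hdist j k, hdist i k] at h
    exact_mod_cast h
  · obtain ⟨i, j, hij⟩ := hDm.1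
    have hne : i ≠ j := by
      intro h
      subst h
      rw [dist_self] at hij
      have : d = 0 := by exact_mod_cast hij.symm
      omega
    refine ⟨i, j, hne, ?_⟩
    rw [hdist i j] at hij
    exact_mod_cast hij
  · have h1 : ∑ i : Fin 4, ∑ j : Fin 4, dist (v i) (v j)
        = ((∑ i : Fin 4, ∑ j : Fin 4, e i j : ℕ) : ℝ) := by
      push_cast
      exact Finset.sum_congr rfl fun i _ => Finset.sum_congr rfl fun j _ => hdist i j
    rw [hP] at h1
    have h2 : (2*(3*d+4) : ℕ) = ((∑ i : Fin 4, ∑ j : Fin 4, e i j : ℕ)) := by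
      exact_mod_cast h1
    omega

lemma perm_of_ne {i0 j0 : Fin 4} (h : i0 ≠ j0) :
    ∃ τ : Equiv.Perm (Fin 4), τ 0 = i0 ∧ τ 1 = j0 := by
  have h1 : (Equiv.swap 0 i0) j0 ≠ 0 := by
    intro hcon
    apply h
    have h2 := congrArg (Equiv.swap 0 i0) hcon
    rw [Equiv.swap_apply_self, Equiv.swap_apply_left] at h2
    exact h2.symm
  refine ⟨(Equiv.swap 1 ((Equiv.swap 0 i0) j0)).trans (Equiv.swap 0 i0), ?_, ?_⟩
  · rw [Equiv.trans_apply, Equiv.swap_apply_of_ne_of_ne (by decide) (Ne.symm h1),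
      Equiv.swap_apply_left]
  · rw [Equiv.trans_apply, Equiv.swap_apply_left, Equiv.swap_apply_self]

lemma fill (d B C b c : ℕ) (e : Fin 4 → Fin 4 → ℕ) (hsym : ∀ i j, e i j = e j i)
    (hdiag : ∀ i, e i i = 0) (f : Fin 4 → Fin 4)
    (v01 : e (f 0) (f 1) = d) (v02 : e (f 0) (f 2) = B) (v03 : e (f 0) (f 3) = b)
    (v12 : e (f 1) (f 2) = C) (v13 : e (f 1) (f 3) = c) (v23 : e (f 2) (f 3) = 2) :
    ∀ i j, e (f i) (f j) = M6 d B C b c i j := by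
  have v10 : e (f 1) (f 0) = d := by rw [hsym]; exact v01
  have v20 : e (f 2) (f 0) = B := by rw [hsym]; exact v02
  have v30 : e (f 3) (f 0) = b := by rw [hsym]; exact v03
  have v21 : e (f 2) (f 1) = C := by rw [hsym]; exact v12
  have v31 : e (f 3) (f 1) = c := by rw [hsym]; exact v13
  have v32 : e (f 3) (f 2) = 2 := by rw [hsym]; exact v23
  intro i j
  fin_cases i <;> fin_cases j <;>
    simp [M6, hdiag, v01, v02, v03, v12, v13, v23, v10, v20, v30, v21, v31, v32]

lemma matnorm (d : ℕ) (e : Fin 4 → Fin 4 → ℕ)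
    (hsym : ∀ i j, e i j = e j i) (hdiag : ∀ i, e i i = 0)
    (hpos : ∀ i j, i ≠ j → 0 < e i j) (hle : ∀ i j, e i j ≤ d)
    (htri : ∀ i j k, i ≠ j → j ≠ k → i ≠ k → e i k < e i j + e j k)
    (hmax : ∃ i j, i ≠ j ∧ e i j = d)
    (hsum : ∑ i, ∑ j, e i j = 6*d+8) :
    ∃ (τ : Equiv.Perm (Fin 4)) (B C b c : ℕ), B + C = d + 1 ∧ b + c = d + 1 ∧
      ((b = B ∧ 2 ≤ B ∧ B+1 ≤ d ∧ 2*B ≤ d+1) ∨ (b = B+1 ∧ 1 ≤ B ∧ B+1 ≤ d ∧ 2*B ≤ d)) ∧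
      ∀ i j, e (τ i) (τ j) = M6 d B C b c i j := by
  obtain ⟨i0, j0, hne, hd0⟩ := hmax
  obtain ⟨τ, ht0, ht1⟩ := perm_of_ne hne
  have hτne : ∀ a b : Fin 4, a ≠ b → τ a ≠ τ b := fun a b hab hc => hab (τ.injective hc)
  have d01 : e (τ 0) (τ 1) = d := by rw [ht0, ht1]; exact hd0
  obtain ⟨B, hB⟩ : ∃ x, e (τ 0) (τ 2) = x := ⟨_, rfl⟩
  obtain ⟨C, hC⟩ : ∃ x, e (τ 1) (τ 2) = x := ⟨_, rfl⟩
  obtain ⟨b, hb⟩ : ∃ x, e (τ 0) (τ 3) = x := ⟨_, rfl⟩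
  obtain ⟨c, hc⟩ : ∃ x, e (τ 1) (τ 3) = x := ⟨_, rfl⟩
  obtain ⟨a, ha⟩ : ∃ x, e (τ 2) (τ 3) = x := ⟨_, rfl⟩
  have hB' : e (τ 2) (τ 0) = B := by rw [hsym]; exact hB
  have hC' : e (τ 2) (τ 1) = C := by rw [hsym]; exact hC
  have hb' : e (τ 3) (τ 0) = b := by rw [hsym]; exact hb
  have hc' : e (τ 3) (τ 1) = c := by rw [hsym]; exact hc
  have ha' : e (τ 3) (τ 2) = a := by rw [hsym]; exact ha
  have d01' : e (τ 1) (τ 0) = d := by rw [hsym]; exact d01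
  -- the sum
  have hsum' : ∑ i, ∑ j, e (τ i) (τ j) = 6*d+8 := by
    calc ∑ i, ∑ j, e (τ i) (τ j) = ∑ i, ∑ j, e (τ i) j :=
          Finset.sum_congr rfl fun i _ => Equiv.sum_comp τ (fun j => e (τ i) j)
      _ = ∑ i, ∑ j, e i j := Equiv.sum_comp τ (fun i => ∑ j, e i j)
      _ = 6*d+8 := hsum
  simp only [Fin.sum_univ_four] at hsum'
  rw [hdiag (τ 0), hdiag (τ 1), hdiag (τ 2), hdiag (τ 3), d01, d01', hB, hB', hC, hC',
    hb, hb', hc, hc', ha, ha'] at hsum'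
  -- triangle inequalities
  have ne01 : (0:Fin 4) ≠ 1 := by decide
  have t1 : d < B + C := by
    have := htri (τ 0) (τ 2) (τ 1) (hτne _ _ (by decide)) (hτne _ _ (by decide)) (hτne _ _ (by decide))
    rwa [d01, hB, hC'] at this
  have t2 : d < b + c := by
    have := htri (τ 0) (τ 3) (τ 1) (hτne _ _ (by decide)) (hτne _ _ (by decide)) (hτne _ _ (by decide))
    rwa [d01, hb, hc'] at this
  have t3 : a < B + b := by
    have := htri (τ 2) (τ 0) (τ 3) (hτne _ _ (by decide)) (hτne _ _ (by decide)) (hτne _ _ (by decide))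
    rwa [ha, hB', hb] at this
  have t4 : B < b + a := by
    have := htri (τ 0) (τ 3) (τ 2) (hτne _ _ (by decide)) (hτne _ _ (by decide)) (hτne _ _ (by decide))
    rwa [hB, hb, ha'] at this
  have t5 : b < B + a := by
    have := htri (τ 0) (τ 2) (τ 3) (hτne _ _ (by decide)) (hτne _ _ (by decide)) (hτne _ _ (by decide))
    rwa [hb, hB, ha] at this
  have t6 : a < C + c := by
    have := htri (τ 2) (τ 1) (τ 3) (hτne _ _ (by decide)) (hτne _ _ (by decide)) (hτne _ _ (by decide))
    rwa [ha, hC', hc] at this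
  have t7 : C < c + a := by
    have := htri (τ 1) (τ 3) (τ 2) (hτne _ _ (by decide)) (hτne _ _ (by decide)) (hτne _ _ (by decide))
    rwa [hC, hc, ha'] at this
  have t8 : c < C + a := by
    have := htri (τ 1) (τ 2) (τ 3) (hτne _ _ (by decide)) (hτne _ _ (by decide)) (hτne _ _ (by decide))
    rwa [hc, hC, ha] at this
  have pB : 0 < B := by rw [← hB]; exact hpos _ _ (hτne _ _ (by decide))
  have pC : 0 < C := by rw [← hC]; exact hpos _ _ (hτne _ _ (by decide))
  have pb : 0 < b := by rw [← hb]; exact hpos _ _ (hτne _ _ (by decide))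
  have pc : 0 < c := by rw [← hc]; exact hpos _ _ (hτne _ _ (by decide))
  have pa : 0 < a := by rw [← ha]; exact hpos _ _ (hτne _ _ (by decide))
  have lB : B ≤ d := by rw [← hB]; exact hle _ _
  have lC : C ≤ d := by rw [← hC]; exact hle _ _
  have lb : b ≤ d := by rw [← hb]; exact hle _ _
  have lc : c ≤ d := by rw [← hc]; exact hle _ _
  have la : a ≤ d := by rw [← ha]; exact hle _ _
  have key : a = 2 ∧ B + C = d + 1 ∧ b + c = d + 1 ∧ (b + 1 = B ∨ b = B ∨ b = B + 1) := by
    omega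
  obtain ⟨ha2, hBC, hbc, hcase3⟩ := key
  rw [ha2] at ha ha'
  rcases hcase3 with hbB|hbB|hbB
  · -- b + 1 = B
    by_cases hsz : 2*b ≤ d
    · refine ⟨(Equiv.swap 2 3).trans τ, b, c, B, C, by omega, by omega, Or.inr (by omega), ?_⟩
      have f0 : ((Equiv.swap 2 3).trans τ) 0 = τ 0 := by rw [Equiv.trans_apply, Equiv.swap_apply_of_ne_of_ne (by decide) (by decide)]
      have f1 : ((Equiv.swap 2 3).trans τ) 1 = τ 1 := by rw [Equiv.trans_apply, Equiv.swap_apply_of_ne_of_ne (by decide) (by decide)]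
      have f2 : ((Equiv.swap 2 3).trans τ) 2 = τ 3 := by
        rw [Equiv.trans_apply, Equiv.swap_apply_left]
      have f3 : ((Equiv.swap 2 3).trans τ) 3 = τ 2 := by
        rw [Equiv.trans_apply, Equiv.swap_apply_right]
      exact fill d b c B C e hsym hdiag _
        (by rw [f0, f1]; exact d01) (by rw [f0, f2]; exact hb) (by rw [f0, f3]; exact hB)
        (by rw [f1, f2]; exact hc) (by rw [f1, f3]; exact hC) (by rw [f2, f3]; exact ha')
    · refine ⟨(Equiv.swap 0 1).trans τ, C, B, c, b, by omega, by omega, Or.inr (by omega), ?_⟩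
      have f0 : ((Equiv.swap 0 1).trans τ) 0 = τ 1 := by
        rw [Equiv.trans_apply, Equiv.swap_apply_left]
      have f1 : ((Equiv.swap 0 1).trans τ) 1 = τ 0 := by
        rw [Equiv.trans_apply, Equiv.swap_apply_right]
      have f2 : ((Equiv.swap 0 1).trans τ) 2 = τ 2 := by rw [Equiv.trans_apply, Equiv.swap_apply_of_ne_of_ne (by decide) (by decide)]
      have f3 : ((Equiv.swap 0 1).trans τ) 3 = τ 3 := by rw [Equiv.trans_apply, Equiv.swap_apply_of_ne_of_ne (by decide) (by decide)]
      exact fill d C B c b e hsym hdiag _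
        (by rw [f0, f1]; exact d01') (by rw [f0, f2]; exact hC) (by rw [f0, f3]; exact hc)
        (by rw [f1, f2]; exact hB) (by rw [f1, f3]; exact hb) (by rw [f2, f3]; exact ha)
  · -- b = B
    by_cases hsz : 2*B ≤ d+1
    · exact ⟨τ, B, C, b, c, by omega, by omega, Or.inl (by omega),
        fill d B C b c e hsym hdiag _ d01 hB hb hC hc ha⟩
    · refine ⟨(Equiv.swap 0 1).trans τ, C, B, c, b, by omega, by omega, Or.inl (by omega), ?_⟩
      have f0 : ((Equiv.swap 0 1).trans τ) 0 = τ 1 := by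
        rw [Equiv.trans_apply, Equiv.swap_apply_left]
      have f1 : ((Equiv.swap 0 1).trans τ) 1 = τ 0 := by
        rw [Equiv.trans_apply, Equiv.swap_apply_right]
      have f2 : ((Equiv.swap 0 1).trans τ) 2 = τ 2 := by rw [Equiv.trans_apply, Equiv.swap_apply_of_ne_of_ne (by decide) (by decide)]
      have f3 : ((Equiv.swap 0 1).trans τ) 3 = τ 3 := by rw [Equiv.trans_apply, Equiv.swap_apply_of_ne_of_ne (by decide) (by decide)]
      exact fill d C B c b e hsym hdiag _
        (by rw [f0, f1]; exact d01') (by rw [f0, f2]; exact hC) (by rw [f0, f3]; exact hc)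
        (by rw [f1, f2]; exact hB) (by rw [f1, f3]; exact hb) (by rw [f2, f3]; exact ha)
  · -- b = B + 1
    by_cases hsz : 2*B ≤ d
    · exact ⟨τ, B, C, b, c, by omega, by omega, Or.inr (by omega),
        fill d B C b c e hsym hdiag _ d01 hB hb hC hc ha⟩
    · refine ⟨((Equiv.swap 0 1).trans (Equiv.swap 2 3)).trans τ, c, b, C, B,
        by omega, by omega, Or.inr (by omega), ?_⟩
      have f0 : (((Equiv.swap 0 1).trans (Equiv.swap 2 3)).trans τ) 0 = τ 1 := by
        rw [Equiv.trans_apply, show ((Equiv.swap 0 1).trans (Equiv.swap 2 3)) (0:Fin 4) = 1 by decide]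
      have f1 : (((Equiv.swap 0 1).trans (Equiv.swap 2 3)).trans τ) 1 = τ 0 := by
        rw [Equiv.trans_apply, show ((Equiv.swap 0 1).trans (Equiv.swap 2 3)) (1:Fin 4) = 0 by decide]
      have f2 : (((Equiv.swap 0 1).trans (Equiv.swap 2 3)).trans τ) 2 = τ 3 := by
        rw [Equiv.trans_apply, show ((Equiv.swap 0 1).trans (Equiv.swap 2 3)) (2:Fin 4) = 3 by decide]
      have f3 : (((Equiv.swap 0 1).trans (Equiv.swap 2 3)).trans τ) 3 = τ 2 := by
        rw [Equiv.trans_apply, show ((Equiv.swap 0 1).trans (Equiv.swap 2 3)) (3:Fin 4) = 2 by decide]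
      exact fill d c b C B e hsym hdiag _
        (by rw [f0, f1]; exact d01') (by rw [f0, f2]; exact hc) (by rw [f0, f3]; exact hC)
        (by rw [f1, f2]; exact hb) (by rw [f1, f3]; exact hB) (by rw [f2, f3]; exact ha')

lemma family (d B C b c : ℕ) (hBC : B + C = d + 1) (hbc : b + c = d + 1)
    (hcase : (b = B ∧ 2 ≤ B ∧ B + 1 ≤ d) ∨ (b = B + 1 ∧ 1 ≤ B ∧ B + 1 ≤ d)) :
    ∃ v : {v : Fin 4 → EuclideanSpace ℝ (Fin 3) //
      IsIntegerTetrahedron v ∧ TetraPerim v (3*d+4) ∧ TetraDiam v d},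
      ∀ i i', dist (v.1 i) (v.1 i') = (M6 d B C b c i i' : ℝ) := by
  obtain ⟨v, hai, hdist⟩ := realize d B C b c hBC hbc hcase
  have hd2 : 2 ≤ d := by omega
  have hI : IsIntegerTetrahedron v :=
    ⟨hai, fun i j h => ⟨M6 d B C b c i j,
      M6_pos d B C b c (by omega) (by omega) (by omega) (by omega) (by omega) i j h,
      hdist i j⟩⟩
  have hP : TetraPerim v (3*d+4) := by
    unfold TetraPerim
    have h1 : ∑ i : Fin 4, ∑ j : Fin 4, dist (v i) (v j)
        = ((∑ i : Fin 4, ∑ j : Fin 4, M6 d B C b c i j : ℕ) : ℝ) := by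
      push_cast
      exact Finset.sum_congr rfl fun i _ => Finset.sum_congr rfl fun j _ => hdist i j
    rw [h1, M6_sum d B C b c hBC hbc]
    push_cast
    ring
  have hD : TetraDiam v d := by
    constructor
    · exact ⟨0, 1, by rw [hdist]; norm_num [M6]⟩
    · intro i j
      rw [hdist]
      exact_mod_cast M6_le d B C b c hd2 (by omega) (by omega) (by omega) (by omega) i j
  exact ⟨⟨v, hI, hP, hD⟩, hdist⟩

theorem tetraCount_perim_3d_add_4 (d : ℕ) (hd : 0 < d) :
    tetraCount (3 * d + 4) d = d - 1 := by
  classical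
  unfold tetraCount
  have hre : Equivalence (fun v w : {v : Fin 4 → EuclideanSpace ℝ (Fin 3) //
      IsIntegerTetrahedron v ∧ TetraPerim v (3*d+4) ∧ TetraDiam v d} =>
      TetraCongruent v.1 w.1) := InvImage.equivalence _ _ tetra_equiv
  have hfam : ∀ j : Fin (d-1), ∃ p : (
      {v : Fin 4 → EuclideanSpace ℝ (Fin 3) //
        IsIntegerTetrahedron v ∧ TetraPerim v (3*d+4) ∧ TetraDiam v d}
      × ℕ × ℕ × ℕ × ℕ),
      p.2.1 = (j.1+1)/2+1 ∧ p.2.2.2.1 = (j.1+2)/2+1 ∧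
      p.2.1 + p.2.2.1 = d + 1 ∧ p.2.2.2.1 + p.2.2.2.2 = d + 1 ∧
      ∀ i i', dist (p.1.1 i) (p.1.1 i') = (M6 d p.2.1 p.2.2.1 p.2.2.2.1 p.2.2.2.2 i i' : ℝ) := by
    intro j
    have hj := j.2
    obtain ⟨v, hv⟩ := family d ((j.1+1)/2+1) (d+1-((j.1+1)/2+1)) ((j.1+2)/2+1)
      (d+1-((j.1+2)/2+1)) (by omega) (by omega) (by omega)
    refine ⟨⟨v, (j.1+1)/2+1, d+1-((j.1+1)/2+1), (j.1+2)/2+1, d+1-((j.1+2)/2+1)⟩,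
      rfl, rfl, ?_, ?_, hv⟩
    · show (j.1+1)/2+1 + (d+1-((j.1+1)/2+1)) = d + 1
      omega
    · show (j.1+2)/2+1 + (d+1-((j.1+2)/2+1)) = d + 1
      omega
  choose P hB hb hBC hbc hFd using hfam
  set F : Fin (d-1) → {v : Fin 4 → EuclideanSpace ℝ (Fin 3) //
      IsIntegerTetrahedron v ∧ TetraPerim v (3*d+4) ∧ TetraDiam v d} :=
    fun j => (P j).1 with hFdef
  set G : Fin (d-1) → Quot (fun v w : {v : Fin 4 → EuclideanSpace ℝ (Fin 3) //
      IsIntegerTetrahedron v ∧ TetraPerim v (3*d+4) ∧ TetraDiam v d} =>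
      TetraCongruent v.1 w.1) := fun j => Quot.mk _ (F j) with hG
  have hP2 : ∀ j : Fin (d-1), ∑ i : Fin 4, (∑ i' : Fin 4, dist ((F j).1 i) ((F j).1 i'))^2
      = ((d:ℝ) + ((j.1:ℝ)+1) + 2)^2 + (3*(d:ℝ) - ((j.1:ℝ)+1))^2 + 2*((d:ℝ)+3)^2 := by
    intro j
    have hj := j.2
    rw [M6_rowsq d _ _ _ _ _ (hFd j)]
    have c1 : (P j).2.1 + (P j).2.2.2.1 = (j.1+1) + 2 := by
      have h1 := hB j; have h2 := hb j; omega
    have c2 : (P j).2.2.1 + (P j).2.2.2.2 + ((j.1+1)) = 2*d := by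
      have h1 := hB j; have h2 := hb j; have h3 := hBC j; have h4 := hbc j; omega
    have c3 := hBC j
    have c4 := hbc j
    have r1 : (((P j).2.1 : ℕ):ℝ) + (((P j).2.2.2.1 : ℕ):ℝ) = ((j.1:ℝ)+1) + 2 := by
      exact_mod_cast congrArg (Nat.cast : ℕ → ℝ) c1
    have r2 : (((P j).2.2.1 : ℕ):ℝ) + (((P j).2.2.2.2 : ℕ):ℝ) = 2*(d:ℝ) - ((j.1:ℝ)+1) := by
      have h := congrArg (Nat.cast : ℕ → ℝ) c2
      push_cast at h
      linarith
    have r3 : (((P j).2.1 : ℕ):ℝ) + (((P j).2.2.1 : ℕ):ℝ) = (d:ℝ)+1 := by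
      exact_mod_cast congrArg (Nat.cast : ℕ → ℝ) c3
    have r4 : (((P j).2.2.2.1 : ℕ):ℝ) + (((P j).2.2.2.2 : ℕ):ℝ) = (d:ℝ)+1 := by
      exact_mod_cast congrArg (Nat.cast : ℕ → ℝ) c4
    linear_combination
      (2*(d:ℝ) + (((P j).2.1 : ℕ):ℝ) + (((P j).2.2.2.1 : ℕ):ℝ) + ((j.1:ℝ)+1) + 2) * r1
      + ((d:ℝ) + (((P j).2.2.1 : ℕ):ℝ) + (((P j).2.2.2.2 : ℕ):ℝ)
          + 3*(d:ℝ) - ((j.1:ℝ)+1)) * r2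
      + ((((P j).2.1 : ℕ):ℝ) + (((P j).2.2.1 : ℕ):ℝ) + 2 + (d:ℝ) + 3) * r3
      + ((((P j).2.2.2.1 : ℕ):ℝ) + (((P j).2.2.2.2 : ℕ):ℝ) + 2 + (d:ℝ) + 3) * r4
  have hGinj : Function.Injective G := by
    intro j j' hGG
    have hEqv := Quot.eq.mp hGG
    have hcg : TetraCongruent (F j).1 (F j').1 := hre.eqvGen_iff.mp hEqv
    obtain ⟨σ, hσ⟩ := hcg
    have hinv := rowsum_invariant σ hσ
    rw [hP2 j, hP2 j'] at hinv
    have hkey : (((j'.1:ℝ)+1) - ((j.1:ℝ)+1)) * ((((j'.1:ℝ)+1) + ((j.1:ℝ)+1)) - (2*(d:ℝ) - 2)) = 0 := by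
      linear_combination (1/2 : ℝ) * hinv
    rcases mul_eq_zero.mp hkey with h|h
    · have h1 : ((j'.1:ℝ)) = ((j.1:ℝ)) := by linarith [sub_eq_zero.mp h]
      have h2 : j'.1 = j.1 := by exact_mod_cast h1
      exact (Fin.ext h2).symm
    · have h2 : ((j'.1:ℝ)) + ((j.1:ℝ)) + 4 = 2*(d:ℝ) := by linarith [sub_eq_zero.mp h]
      have h3 : ((j'.1 + j.1 + 4 : ℕ):ℝ) = ((2*d : ℕ):ℝ) := by push_cast; linarith
      have h4 : j'.1 + j.1 + 4 = 2*d := by exact_mod_cast h3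
      have hj := j.2
      have hj' := j'.2
      exact Fin.ext (by omega)
  have hGsurj : Function.Surjective G := by
    intro x
    induction x using Quot.ind with
    | _ a =>
      obtain ⟨v, hI, hP, hDm⟩ := a
      obtain ⟨e, hdist, hsym, hdiag, hpos, hle, htri, hmax, hsum⟩ :=
        edges_exist d hd v hI hP hDm
      obtain ⟨τ, B, C, b, c, hBC', hbc', hcase, hmat⟩ :=
        matnorm d e hsym hdiag hpos hle htri hmax hsum
      have hcong : ∀ j : Fin (d-1),
          ((P j).2.1 = B) → ((P j).2.2.1 = C) → ((P j).2.2.2.1 = b) →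
          ((P j).2.2.2.2 = c) → G j = Quot.mk _ ⟨v, hI, hP, hDm⟩ := by
        intro j h1 h2 h3 h4
        apply Quot.sound
        have hFdj := hFd j
        rw [h1, h2, h3, h4] at hFdj
        refine ⟨τ⁻¹, fun i i' => ?_⟩
        calc dist (v i) (v i') = (e i i' : ℝ) := hdist i i'
          _ = (e (τ (τ⁻¹ i)) (τ (τ⁻¹ i')) : ℝ) := by
              rw [Equiv.Perm.coe_inv, Equiv.apply_symm_apply, Equiv.apply_symm_apply]
          _ = (M6 d B C b c (τ⁻¹ i) (τ⁻¹ i') : ℝ) := by rw [hmat]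
          _ = dist ((F j).1 (τ⁻¹ i)) ((F j).1 (τ⁻¹ i')) := (hFdj _ _).symm
      rcases hcase with ⟨hbB, h2B, hBd, hBle⟩|⟨hbB, h1B, hBd, hBle⟩
      · have hjlt : 2*B-2-1 < d - 1 := by omega
        refine ⟨⟨2*B-2-1, hjlt⟩, ?_⟩
        have h1 := hB ⟨2*B-2-1, hjlt⟩
        have h2 := hb ⟨2*B-2-1, hjlt⟩
        have h3 := hBC ⟨2*B-2-1, hjlt⟩
        have h4 := hbc ⟨2*B-2-1, hjlt⟩
        have hval : (⟨2*B-2-1, hjlt⟩ : Fin (d-1)).1 = 2*B-2-1 := rfl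
        rw [hval] at h1 h2
        exact hcong _ (by omega) (by omega) (by omega) (by omega)
      · have hjlt : 2*B-1-1 < d - 1 := by omega
        refine ⟨⟨2*B-1-1, hjlt⟩, ?_⟩
        have h1 := hB ⟨2*B-1-1, hjlt⟩
        have h2 := hb ⟨2*B-1-1, hjlt⟩
        have h3 := hBC ⟨2*B-1-1, hjlt⟩
        have h4 := hbc ⟨2*B-1-1, hjlt⟩
        have hval : (⟨2*B-1-1, hjlt⟩ : Fin (d-1)).1 = 2*B-1-1 := rfl
        rw [hval] at h1 h2
        exact hcong _ (by omega) (by omega) (by omega) (by omega)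
  have hcard := Nat.card_eq_of_bijective G ⟨hGinj, hGsurj⟩
  rw [← hcard, Nat.card_eq_fintype_card, Fintype.card_fin]
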